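/- arXiv:1310.7514 — 3 statements merged into one kernel-verified Lean document; each statement's English description precedes it below -/
import Mathlib

section
/- For all a, b, c, d : Fin p → ZMod 2, the Pauli spinors obey the sign-commutation relation σ(a,b) * σ(c,d) = (-1)^(ω((a,b),(c,d))) • (σ(c,d) * σ(a,b)), where ω((a,b),(c,d)) = a⬝d + b⬝c; in particular any two Pauli spinors either commute or anticommute. -/
open Matrix BigOperators

/-- The mod-2 dot product of two bitstrings. -/
def dotp {p : ℕ} (a b : Fin p → ZMod 2) : ZMod 2 := ∑ i, a i * b i

/-- The sign `(-1)^t` for `t : ZMod 2`. -/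
noncomputable def sgn (t : ZMod 2) : ℂ := (-1 : ℂ) ^ t.val

/-- The Pauli spinor matrix `σ(a,b)`, representing `⊗ᵢ X^(a i) Z^(b i)`:
`σ(a,b) x y = (-1)^(b⬝x)` if `y = x + a` and `0` otherwise. -/
noncomputable def pauli {p : ℕ} (a b : Fin p → ZMod 2) :
    Matrix (Fin p → ZMod 2) (Fin p → ZMod 2) ℂ :=
  fun x y => if y = x + a then sgn (dotp b x) else 0

/-- The symplectic form `ω((a,b),(c,d)) = a⬝d + b⬝c` on pairs of bitstrings. -/
def omegaF {p : ℕ} (u v : (Fin p → ZMod 2) × (Fin p → ZMod 2)) : ZMod 2 :=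
  dotp u.1 v.2 + dotp u.2 v.1

/-- A subspace is isotropic if `ω` vanishes on all pairs of its elements. -/
def IsIsotropic {p : ℕ}
    (V : Submodule (ZMod 2) ((Fin p → ZMod 2) × (Fin p → ZMod 2))) : Prop :=
  ∀ u ∈ V, ∀ v ∈ V, omegaF u v = 0

/-- A maximal isotropic subspace: isotropic and not properly contained in any
isotropic subspace. -/
def IsMaxIsotropic {p : ℕ}
    (V : Submodule (ZMod 2) ((Fin p → ZMod 2) × (Fin p → ZMod 2))) : Prop :=
  IsIsotropic V ∧ ∀ W, IsIsotropic W → V ≤ W → W = V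

lemma sgn_eq (t : ZMod 2) : sgn t = if t = 0 then 1 else -1 := by
  obtain rfl | rfl : t = 0 ∨ t = 1 := by revert t; decide
  all_goals simp [sgn, show ZMod.val (1 : ZMod 2) = 1 from rfl]

lemma sgn_add (s t : ZMod 2) : sgn (s + t) = sgn s * sgn t := by
  rw [sgn_eq, sgn_eq, sgn_eq]
  obtain rfl | rfl : s = 0 ∨ s = 1 := by revert s; decide
  all_goals obtain rfl | rfl : t = 0 ∨ t = 1 := by revert t; decide
  all_goals simp only [show (1 : ZMod 2) + 1 = 0 from rfl, add_zero, zero_add]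
  all_goals norm_num [show (1 : ZMod 2) + 1 = 0 from rfl, show (1 : ZMod 2) ≠ 0 from by decide]

lemma sgn_sq (t : ZMod 2) : sgn t ^ 2 = 1 := by
  rw [sgn_eq]; by_cases h : t = 0 <;> simp [h]

lemma sum_ite_ite {α : Type*} [Fintype α] [DecidableEq α] (w : α) (P : α → Prop)
    [DecidablePred P] (f : α → ℂ) :
    (∑ z, if P z then if z = w then f z else 0 else 0) = if P w then f w else 0 := by
  rw [Finset.sum_eq_single_of_mem w (Finset.mem_univ w)]
  · by_cases h : P w <;> simp [h]
  · intro z _ hz; simp [hz]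

lemma dotp_comm {p : ℕ} (a b : Fin p → ZMod 2) : dotp a b = dotp b a := by
  simp [dotp, mul_comm]

lemma dotp_add_right {p : ℕ} (b x y : Fin p → ZMod 2) :
    dotp b (x + y) = dotp b x + dotp b y := by
  simp [dotp, mul_add, Finset.sum_add_distrib]

/-- The Pauli spinors obey the sign-commutation relation
`σ(a,b) * σ(c,d) = (-1)^(ω((a,b),(c,d))) • (σ(c,d) * σ(a,b))` with
`ω((a,b),(c,d)) = a⬝d + b⬝c`; in particular any two Pauli spinors either commute or
anticommute. -/
theorem pauli_sign_comm {p : ℕ} (hp : 1 ≤ p) (a b c d : Fin p → ZMod 2) :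
    pauli a b * pauli c d = sgn (omegaF (a, b) (c, d)) • (pauli c d * pauli a b) := by
  ext x y
  simp only [Matrix.mul_apply, Matrix.smul_apply, pauli, ite_mul, mul_ite, zero_mul,
    mul_zero]
  rw [sum_ite_ite (x + a) (fun z => y = z + c), sum_ite_ite (x + c) (fun z => y = z + a)]
  by_cases h : y = x + a + c
  · have h' : y = x + c + a := by rw [h]; ring
    rw [if_pos h, if_pos (show y = x + c + a from h')]
    rw [dotp_add_right, dotp_add_right]
    simp only [smul_eq_mul, omegaF]
    rw [sgn_add, sgn_add, sgn_add]
    rw [dotp_comm d a, dotp_comm b c]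
    linear_combination (-(sgn (dotp b x) * sgn (dotp d x) * sgn (dotp a d))) * sgn_sq (dotp c b)
  · have h' : ¬ y = x + c + a := by rw [show x + c + a = x + a + c by ring]; exact h
    rw [if_neg h, if_neg (show ¬ y = x + c + a from h'), smul_zero]
end

section
/- For all a, b, c, d : Fin p → ZMod 2, the Pauli spinors σ(a,b) and σ(c,d) commute (σ(a,b) * σ(c,d) = σ(c,d) * σ(a,b)) if and only if ω((a,b),(c,d)) = a⬝d + b⬝c = 0 in ZMod 2. Thus abelian sets of spinors correspond exactly to isotropic sets of labels. -/
open Matrix BigOperators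

lemma sgn_zero : sgn 0 = 1 := by simp [sgn]

lemma sgn_inj {s t : ZMod 2} (h : sgn s = sgn t) : s = t := by
  revert h; fin_cases s <;> fin_cases t <;> norm_num [sgn, ZMod.val] <;> rfl

lemma dotp_zero_right {p : ℕ} (b : Fin p → ZMod 2) : dotp b 0 = 0 := by
  simp [dotp]

lemma pauli_mul {p : ℕ} (a b c d : Fin p → ZMod 2) (x y : Fin p → ZMod 2) :
    (pauli a b * pauli c d) x y =
      if y = x + a + c then sgn (dotp b x) * sgn (dotp d (x + a)) else 0 := by
  rw [Matrix.mul_apply]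
  rw [Finset.sum_eq_single (x + a)]
  · simp [pauli]
  · intro z _ hz
    simp [pauli, hz]
  · simp

/-- `σ(a,b)` and `σ(c,d)` commute iff `ω((a,b),(c,d)) = a⬝d + b⬝c = 0`
in `ZMod 2`: abelian sets of spinors correspond exactly to isotropic sets of labels. -/
theorem pauli_commute_iff {p : ℕ} (hp : 1 ≤ p) (a b c d : Fin p → ZMod 2) :
    pauli a b * pauli c d = pauli c d * pauli a b ↔ omegaF (a, b) (c, d) = 0 := by
  constructor
  · intro h
    have h0 := congrFun (congrFun h 0) (a + c)
    rw [pauli_mul, pauli_mul] at h0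
    simp only [zero_add, dotp_zero_right] at h0
    rw [if_true, if_pos (by ring : a + c = c + a)] at h0
    rw [sgn_zero, one_mul, one_mul] at h0
    have : dotp d a = dotp b c := sgn_inj h0
    have h2 : omegaF (a, b) (c, d) = dotp d a + dotp b c := by
      simp [omegaF, dotp_comm a d]
    rw [h2, this]
    simpa using (CharTwo.add_self_eq_zero (dotp b c))
  · intro h
    have hbc : dotp d a = dotp b c := by
      have h' : dotp d a + dotp b c = 0 := by
        rw [dotp_comm d a]; exact h
      have := eq_neg_of_add_eq_zero_left h'
      simpa [CharTwo.neg_eq] using this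
    ext x y
    rw [pauli_mul, pauli_mul]
    have hcond : (y = x + a + c) ↔ (y = x + c + a) := by
      constructor <;> intro h' <;> rw [h'] <;> ring
    rw [if_congr hcond rfl rfl]
    split
    · rw [dotp_add_right, dotp_add_right, sgn_add, sgn_add, hbc]
      ring
    · rfl
end

section
/- Let V be a maximal isotropic subspace with respect to ω. If (c,d) and (e,f) lie in distinct cosets of V (i.e. (c+e, d+f) ∉ V), then there exists (a,b) ∈ V whose eigenvalue patterns on the two corresponding syndrome states differ: ω((a,b),(c,d)) ≠ ω((a,b),(e,f)) in ZMod 2. Hence measuring the spinors of the Cartanion distinguishes the syndromes belonging to different coset subspaces. (Used in the paper's Corollary 1 on correcting a given error set.) -/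
open Matrix BigOperators

lemma dotp_add_left {p : ℕ} (a b c : Fin p → ZMod 2) :
    dotp (a + b) c = dotp a c + dotp b c := by
  unfold dotp
  rw [← Finset.sum_add_distrib]
  exact Finset.sum_congr rfl fun i _ => by simp [add_mul]

lemma dotp_smul_left {p : ℕ} (t : ZMod 2) (a b : Fin p → ZMod 2) :
    dotp (t • a) b = t * dotp a b := by
  unfold dotp
  rw [Finset.mul_sum]
  exact Finset.sum_congr rfl fun i _ => by simp [mul_assoc]

lemma omegaF_comm {p : ℕ} (u v : (Fin p → ZMod 2) × (Fin p → ZMod 2)) :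
    omegaF u v = omegaF v u := by
  unfold omegaF
  rw [dotp_comm u.1 v.2, dotp_comm u.2 v.1, add_comm]

lemma omegaF_add_left {p : ℕ} (u v w : (Fin p → ZMod 2) × (Fin p → ZMod 2)) :
    omegaF (u + v) w = omegaF u w + omegaF v w := by
  unfold omegaF
  simp only [Prod.fst_add, Prod.snd_add, dotp_add_left]
  ring

lemma omegaF_smul_left {p : ℕ} (t : ZMod 2) (u w : (Fin p → ZMod 2) × (Fin p → ZMod 2)) :
    omegaF (t • u) w = t * omegaF u w := by
  unfold omegaF
  simp only [Prod.smul_fst, Prod.smul_snd, dotp_smul_left, mul_add]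

lemma omegaF_smul_right {p : ℕ} (t : ZMod 2) (u w : (Fin p → ZMod 2) × (Fin p → ZMod 2)) :
    omegaF w (t • u) = t * omegaF w u := by
  rw [omegaF_comm, omegaF_smul_left, omegaF_comm]

lemma omegaF_add_right {p : ℕ} (u v w : (Fin p → ZMod 2) × (Fin p → ZMod 2)) :
    omegaF w (u + v) = omegaF w u + omegaF w v := by
  rw [omegaF_comm, omegaF_add_left, omegaF_comm u w, omegaF_comm v w]

lemma omegaF_self {p : ℕ} (u : (Fin p → ZMod 2) × (Fin p → ZMod 2)) :
    omegaF u u = 0 := by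
  unfold omegaF
  rw [dotp_comm]
  exact CharTwo.add_self_eq_zero _

/-- used in the paper's Corollary 1: If `(c,d)` and `(e,f)` lie in
distinct cosets of a maximal isotropic subspace `V`, then some `(a,b) ∈ V` has
different eigenvalue patterns on the two syndromes:
`ω((a,b),(c,d)) ≠ ω((a,b),(e,f))`. -/
theorem exists_distinguishing_spinor {p : ℕ} (hp : 1 ≤ p)
    (V : Submodule (ZMod 2) ((Fin p → ZMod 2) × (Fin p → ZMod 2)))
    (hV : IsMaxIsotropic V) (c d e f : Fin p → ZMod 2)
    (hne : (c + e, d + f) ∉ V) :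
    ∃ u ∈ V, omegaF u (c, d) ≠ omegaF u (e, f) := by
  by_contra h
  push_neg at h
  set w : (Fin p → ZMod 2) × (Fin p → ZMod 2) := (c + e, d + f) with hw
  have hw0 : ∀ u ∈ V, omegaF u w = 0 := by
    intro u hu
    have : omegaF u w = omegaF u (c, d) + omegaF u (e, f) := by
      have : w = ((c, d) : _ × _) + (e, f) := rfl
      rw [this, omegaF_add_right]
    rw [this, h u hu, CharTwo.add_self_eq_zero]
  set W := V ⊔ Submodule.span (ZMod 2) {w} with hWdef
  have hWiso : IsIsotropic W := by
    intro x hx y hy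
    rw [hWdef, Submodule.mem_sup] at hx hy
    obtain ⟨v1, hv1, z1, hz1, rfl⟩ := hx
    obtain ⟨v2, hv2, z2, hz2, rfl⟩ := hy
    rw [Submodule.mem_span_singleton] at hz1 hz2
    obtain ⟨t1, rfl⟩ := hz1
    obtain ⟨t2, rfl⟩ := hz2
    rw [omegaF_add_left, omegaF_add_right, omegaF_add_right, omegaF_smul_left,
      omegaF_smul_right, omegaF_smul_right, omegaF_smul_left, omegaF_comm w v2, hw0 v2 hv2,
      hw0 v1 hv1, hV.1 v1 hv1 v2 hv2, omegaF_self]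
    ring
  have hle : V ≤ W := le_sup_left
  have hWV : W = V := hV.2 W hWiso hle
  apply hne
  rw [← hWV]
  exact Submodule.mem_sup_right (Submodule.mem_span_singleton_self w)
end
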